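/- Let α, c, σ > 0, set K = 2α³/(cσ²), and let r̂ ∈ (1/2, 1) be the unique solution of l(r̂) = K. For each ε ∈ (0, 2r̂ − 1), let r̄(ε) ∈ (0,1) be the unique solution of l(r̄(ε)) + l((1+ε)/2) = 2K. Then the function ε ↦ log((1+ε)/(1−ε)) + log(r̄(ε)/(1−r̄(ε))) is strictly increasing on (0, 2r̂ − 1). (Equivalently, the optimal continuation threshold z̄ = (σ²/(2α))·[log((1+ε)/(1−ε)) + log(r̄(ε)/(1−r̄(ε)))] is strictly increasing in the ambiguity parameter ε.) -/

import Mathlib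

/-- `l(r) = 2·log(r/(1−r)) − 1/r + 1/(1−r)`. -/
noncomputable def l (r : ℝ) : ℝ := 2 * Real.log (r / (1 - r)) - 1 / r + 1 / (1 - r)

noncomputable def hh (r : ℝ) : ℝ := 1 / (1 - r) - 1 / r

lemma log_eq_l_hh {r : ℝ} : Real.log (r / (1 - r)) = (l r - hh r) / 2 := by
  simp only [l, hh]; ring

lemma hasDerivAt_log_ratio {r : ℝ} (h0 : 0 < r) (h1 : r < 1) :
    HasDerivAt (fun x : ℝ => Real.log (x / (1 - x))) (1/r + 1/(1-r)) r := by
  have h1' : (0:ℝ) < 1 - r := by linarith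
  have h2 : HasDerivAt (fun x : ℝ => Real.log (1 - x)) (-(1/(1-r))) r := by
    have := (Real.hasDerivAt_log (ne_of_gt h1')).comp r ((hasDerivAt_id r).const_sub 1)
    exact this.congr_deriv (by ring)
  have h3 : HasDerivAt (fun x : ℝ => Real.log x - Real.log (1 - x)) (1/r + 1/(1-r)) r := by
    have := (Real.hasDerivAt_log (ne_of_gt h0)).sub h2
    exact this.congr_deriv (by ring)
  refine h3.congr_of_eventuallyEq ?_
  have hmem : Set.Ioo (0:ℝ) 1 ∈ nhds r := (isOpen_Ioo).mem_nhds ⟨h0, h1⟩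
  filter_upwards [hmem] with x hx
  rw [Real.log_div (ne_of_gt hx.1) (by linarith [hx.2] : (1:ℝ) - x ≠ 0)]

lemma hasDerivAt_inv_aux {r : ℝ} (h0 : r ≠ 0) :
    HasDerivAt (fun x : ℝ => 1 / x) (-(1/r^2)) r := by
  have := hasDerivAt_inv h0
  simpa [one_div] using this

lemma hasDerivAt_inv_one_sub {r : ℝ} (h1 : (1:ℝ) - r ≠ 0) :
    HasDerivAt (fun x : ℝ => 1 / (1 - x)) (1/(1-r)^2) r := by
  have := (hasDerivAt_inv_aux h1).comp r ((hasDerivAt_id r).const_sub 1)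
  exact this.congr_deriv (by ring)

lemma hasDerivAt_l {r : ℝ} (h0 : 0 < r) (h1 : r < 1) :
    HasDerivAt l (1 / (r * (1 - r))^2) r := by
  have h1' : (0:ℝ) < 1 - r := by linarith
  have hd : HasDerivAt l (2 * (1/r + 1/(1-r)) - (-(1/r^2)) + 1/(1-r)^2) r := by
    exact (((hasDerivAt_log_ratio h0 h1).const_mul 2).sub
      (hasDerivAt_inv_aux (ne_of_gt h0))).add (hasDerivAt_inv_one_sub (ne_of_gt h1'))
  convert hd using 1
  field_simp
  ring

lemma hasDerivAt_hh {r : ℝ} (h0 : 0 < r) (h1 : r < 1) :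
    HasDerivAt hh ((r^2 + (1-r)^2) / (r * (1 - r))^2) r := by
  have h1' : (0:ℝ) < 1 - r := by linarith
  have hd : HasDerivAt hh (1/(1-r)^2 - (-(1/r^2))) r :=
    (hasDerivAt_inv_one_sub (ne_of_gt h1')).sub (hasDerivAt_inv_aux (ne_of_gt h0))
  convert hd using 1
  have hr0 : r ≠ 0 := ne_of_gt h0
  have hr1 : (1:ℝ) - r ≠ 0 := ne_of_gt h1'
  field_simp
  ring

lemma l_strictMonoOn : StrictMonoOn l (Set.Ioo (0:ℝ) 1) := by
  apply strictMonoOn_of_deriv_pos (convex_Ioo 0 1)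
  · intro x hx
    exact (hasDerivAt_l hx.1 hx.2).differentiableAt.continuousAt.continuousWithinAt
  · intro x hx
    rw [interior_Ioo] at hx
    rw [(hasDerivAt_l hx.1 hx.2).deriv]
    have hpos : 0 < x * (1 - x) := mul_pos hx.1 (by linarith [hx.2])
    positivity

/-- Key comparison: for `1/2 ≤ a ≤ b < 1`,
`φ(a)·(l b − l a) ≤ hh b − hh a ≤ φ(b)·(l b − l a)` where `φ(x) = x²+(1−x)²`. -/
lemma key_comparison {a b : ℝ} (ha : 1/2 ≤ a) (hab : a ≤ b) (hb : b < 1) :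
    (a^2 + (1-a)^2) * (l b - l a) ≤ hh b - hh a ∧
    hh b - hh a ≤ (b^2 + (1-b)^2) * (l b - l a) := by
  have ha0 : (0:ℝ) < a := by linarith
  have hsub : Set.Icc a b ⊆ Set.Ioo (0:ℝ) 1 := fun x hx => ⟨by linarith [hx.1], by linarith [hx.2]⟩
  constructor
  · -- F x = hh x - φ(a) * l x is monotone on [a,b]
    set φa := a^2 + (1-a)^2 with hφa
    have hmono : MonotoneOn (fun x => hh x - φa * l x) (Set.Icc a b) := by
      apply monotoneOn_of_deriv_nonneg (convex_Icc a b)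
      · intro x hx
        have hx' := hsub hx
        exact (((hasDerivAt_hh hx'.1 hx'.2).sub
          ((hasDerivAt_l hx'.1 hx'.2).const_mul φa)).differentiableAt.continuousAt).continuousWithinAt
      · intro x hx
        rw [interior_Icc] at hx
        have hx' := hsub (Set.mem_Icc_of_Ioo hx)
        exact (((hasDerivAt_hh hx'.1 hx'.2).sub
          ((hasDerivAt_l hx'.1 hx'.2).const_mul φa)).differentiableAt).differentiableWithinAt
      · intro x hx
        rw [interior_Icc] at hx
        have hx' := hsub (Set.mem_Icc_of_Ioo hx)
        rw [HasDerivAt.deriv (f := fun x => hh x - φa * l x) ((hasDerivAt_hh hx'.1 hx'.2).sub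
          ((hasDerivAt_l hx'.1 hx'.2).const_mul φa))]
        have hφ : φa ≤ x^2 + (1-x)^2 := by nlinarith [hx.1, hx.2, ha]
        have hpos : (0:ℝ) < (x * (1 - x))^2 := by
          have h0x : 0 < x * (1 - x) := mul_pos hx'.1 (by linarith [hx'.2])
          positivity
        have heq : (x^2 + (1-x)^2) / (x * (1 - x))^2 - φa * (1 / (x * (1 - x))^2)
            = (x^2 + (1-x)^2 - φa) / (x * (1 - x))^2 := by ring
        rw [heq]
        exact div_nonneg (by linarith) (le_of_lt hpos)
    have := hmono (Set.left_mem_Icc.mpr hab) (Set.right_mem_Icc.mpr hab) hab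
    simp only at this
    linarith
  · set φb := b^2 + (1-b)^2 with hφb
    have hmono : MonotoneOn (fun x => φb * l x - hh x) (Set.Icc a b) := by
      apply monotoneOn_of_deriv_nonneg (convex_Icc a b)
      · intro x hx
        have hx' := hsub hx
        exact ((((hasDerivAt_l hx'.1 hx'.2).const_mul φb).sub
          (hasDerivAt_hh hx'.1 hx'.2)).differentiableAt.continuousAt).continuousWithinAt
      · intro x hx
        rw [interior_Icc] at hx
        have hx' := hsub (Set.mem_Icc_of_Ioo hx)
        exact ((((hasDerivAt_l hx'.1 hx'.2).const_mul φb).sub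
          (hasDerivAt_hh hx'.1 hx'.2)).differentiableAt).differentiableWithinAt
      · intro x hx
        rw [interior_Icc] at hx
        have hx' := hsub (Set.mem_Icc_of_Ioo hx)
        rw [HasDerivAt.deriv (f := fun x => φb * l x - hh x) (((hasDerivAt_l hx'.1 hx'.2).const_mul φb).sub
          (hasDerivAt_hh hx'.1 hx'.2))]
        have hxb : x < 1 := lt_of_lt_of_le hx.2 (le_of_lt hb)
        have hφ : x^2 + (1-x)^2 ≤ φb := by nlinarith [hx.1, hx.2, ha]
        have hpos : (0:ℝ) < (x * (1 - x))^2 := by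
          have h0x : 0 < x * (1 - x) := mul_pos hx'.1 (by linarith [hx'.2])
          positivity
        have heq : φb * (1 / (x * (1 - x))^2) - (x^2 + (1-x)^2) / (x * (1 - x))^2
            = (φb - (x^2 + (1-x)^2)) / (x * (1 - x))^2 := by ring
        rw [heq]
        exact div_nonneg (by linarith) (le_of_lt hpos)
    have := hmono (Set.left_mem_Icc.mpr hab) (Set.right_mem_Icc.mpr hab) hab
    simp only at this
    linarith

theorem stmt_15 (α c σ rhat : ℝ) (rbar : ℝ → ℝ)
    (hα : 0 < α) (hc : 0 < c) (hσ : 0 < σ)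
    (hrhat : rhat ∈ Set.Ioo (1 / 2 : ℝ) 1)
    (hrhat_eq : l rhat = 2 * α ^ 3 / (c * σ ^ 2))
    (hrbar : ∀ ε ∈ Set.Ioo (0 : ℝ) (2 * rhat - 1),
      rbar ε ∈ Set.Ioo (0 : ℝ) 1 ∧
      l (rbar ε) + l ((1 + ε) / 2) = 2 * (2 * α ^ 3 / (c * σ ^ 2))) :
    StrictMonoOn
      (fun ε : ℝ =>
        Real.log ((1 + ε) / (1 - ε)) + Real.log (rbar ε / (1 - rbar ε)))
      (Set.Ioo (0 : ℝ) (2 * rhat - 1)) := by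
  set K := 2 * α ^ 3 / (c * σ ^ 2) with hK
  intro ε₁ hε₁ ε₂ hε₂ hlt
  obtain ⟨hr1mem, hr1eq⟩ := hrbar ε₁ hε₁
  obtain ⟨hr2mem, hr2eq⟩ := hrbar ε₂ hε₂
  set s₁ := (1 + ε₁) / 2 with hs₁
  set s₂ := (1 + ε₂) / 2 with hs₂
  set r₁ := rbar ε₁ with hr₁
  set r₂ := rbar ε₂ with hr₂
  have hrhat01 : rhat ∈ Set.Ioo (0:ℝ) 1 := ⟨by linarith [hrhat.1], hrhat.2⟩
  have hs₁mem : s₁ ∈ Set.Ioo (0:ℝ) 1 := ⟨by linarith [hε₁.1], by linarith [hε₁.2, hrhat.2]⟩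
  have hs₂mem : s₂ ∈ Set.Ioo (0:ℝ) 1 := ⟨by linarith [hε₂.1], by linarith [hε₂.2, hrhat.2]⟩
  have hs₁rhat : s₁ < rhat := by simp only [hs₁]; linarith [hε₁.2]
  have hs₂rhat : s₂ < rhat := by simp only [hs₂]; linarith [hε₂.2]
  -- l s_i < K, hence l r_i > K, hence r_i > rhat
  have hls₁ : l s₁ < K := by
    have := l_strictMonoOn hs₁mem hrhat01 hs₁rhat
    rwa [hrhat_eq] at this
  have hls₂ : l s₂ < K := by
    have := l_strictMonoOn hs₂mem hrhat01 hs₂rhat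
    rwa [hrhat_eq] at this
  have hlr₁ : l rhat < l r₁ := by rw [hrhat_eq]; linarith
  have hlr₂ : l rhat < l r₂ := by rw [hrhat_eq]; linarith
  have hr₁rhat : rhat < r₁ := (l_strictMonoOn.lt_iff_lt hrhat01 hr1mem).mp hlr₁
  have hr₂rhat : rhat < r₂ := (l_strictMonoOn.lt_iff_lt hrhat01 hr2mem).mp hlr₂
  -- s₁ < s₂, so l s₁ < l s₂, hence l r₂ < l r₁, hence r₂ < r₁
  have hs₁₂ : s₁ < s₂ := by simp only [hs₁, hs₂]; linarith
  have hlΔ : l s₁ < l s₂ := l_strictMonoOn hs₁mem hs₂mem hs₁₂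
  have hΔeq : l s₂ - l s₁ = l r₁ - l r₂ := by linarith
  have hr₂₁ : r₂ < r₁ :=
    (l_strictMonoOn.lt_iff_lt hr2mem hr1mem).mp (by linarith)
  -- comparison lemmas
  have hkey_s := key_comparison (a := s₁) (b := s₂)
    (by simp only [hs₁]; linarith [hε₁.1]) (le_of_lt hs₁₂) hs₂mem.2
  have hkey_r := key_comparison (a := r₂) (b := r₁)
    (by linarith [hrhat.1]) (le_of_lt hr₂₁) hr1mem.2
  -- φ(s₂) < φ(r₂)
  have hφlt : s₂^2 + (1-s₂)^2 < r₂^2 + (1-r₂)^2 := by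
    have h1 : s₂ < r₂ := hs₂rhat.trans hr₂rhat
    have h2 : (1:ℝ) < s₂ + r₂ := by
      have h3 : s₂ = (1 + ε₂) / 2 := hs₂
      linarith [hε₂.1, hrhat.1, hr₂rhat]
    nlinarith [mul_pos (sub_pos.mpr h1) (sub_pos.mpr h2)]
  have hΔpos : 0 < l s₂ - l s₁ := by linarith
  -- chain of inequalities on hh
  have hchain : hh s₂ - hh s₁ < hh r₁ - hh r₂ := by
    have h1 : hh s₂ - hh s₁ ≤ (s₂^2 + (1-s₂)^2) * (l s₂ - l s₁) := hkey_s.2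
    have h2 : (r₂^2 + (1-r₂)^2) * (l r₁ - l r₂) ≤ hh r₁ - hh r₂ := hkey_r.1
    have h3 : (s₂^2 + (1-s₂)^2) * (l s₂ - l s₁) < (r₂^2 + (1-r₂)^2) * (l s₂ - l s₁) :=
      mul_lt_mul_of_pos_right hφlt hΔpos
    rw [hΔeq] at h3 h1
    linarith
  -- rewrite the goal via l and hh
  simp only
  have e₁ : (1 + ε₁) / (1 - ε₁) = s₁ / (1 - s₁) := by
    rw [hs₁]; rw [div_eq_div_iff (by linarith [hε₁.2, hrhat.2]) (by linarith [hε₁.2, hrhat.2])]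
    ring
  have e₂ : (1 + ε₂) / (1 - ε₂) = s₂ / (1 - s₂) := by
    rw [hs₂]; rw [div_eq_div_iff (by linarith [hε₂.2, hrhat.2]) (by linarith [hε₂.2, hrhat.2])]
    ring
  rw [e₁, e₂, log_eq_l_hh, log_eq_l_hh, log_eq_l_hh, log_eq_l_hh]
  -- now goal is in terms of l and hh; use constraint equations
  have c₁ : l r₁ + l s₁ = 2 * K := hr1eq
  have c₂ : l r₂ + l s₂ = 2 * K := hr2eq
  linarith
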